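/- Let n ≥ 2 and F : (Fin n → ZMod 2) → ZMod 2. Suppose there exist indices i ≠ j in Fin n and a function G : (Fin n → ZMod 2) → ZMod 2 satisfying G q = G q' whenever q and q' agree at all coordinates outside {i, j}, such that F q = q i + q j + G q for all q. Let ψ_F be the (n+1)-qubit balanced state with functional dependency F: ψ_F s = 2^(−n/2) if s n equals F applied to the first n coordinates of s (identifying Fin 2 with ZMod 2) and ψ_F s = 0 otherwise. Then, in the measurement scenario in which each of the n+1 parties may choose between the Pauli observables Y and Z, the empirical model of ψ_F is strongly contextual. -/

import Mathlib

open Complex Finset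

/-- A local observable: a pair of vectors forming an orthonormal basis of ℂ². -/
structure Obs where
  eplus : Fin 2 → ℂ
  eminus : Fin 2 → ℂ
  norm_plus : ∑ a : Fin 2, ‖eplus a‖ ^ 2 = 1
  norm_minus : ∑ a : Fin 2, ‖eminus a‖ ^ 2 = 1
  orth : ∑ a : Fin 2, (starRingEnd ℂ) (eplus a) * eminus a = 0

/-- Probability that context `c` yields joint outcome `o` on state `ψ`. -/
noncomputable def jointProb {n : ℕ} (ψ : (Fin n → Fin 2) → ℂ) (c : Fin n → Obs)
    (o : Fin n → Bool) : ℝ :=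
  ‖∑ s : Fin n → Fin 2,
      (∏ i : Fin n,
        (starRingEnd ℂ) ((if o i then (c i).eplus else (c i).eminus) (s i))) * ψ s‖ ^ 2

/-- A global assignment `g` is consistent if in every context of the scenario `M`
the induced joint outcome is possible. -/
def Consistent {n : ℕ} (ψ : (Fin n → Fin 2) → ℂ) (M : Fin n → Set Obs)
    (g : Fin n → Obs → Bool) : Prop :=
  ∀ c : Fin n → Obs, (∀ i, c i ∈ M i) → jointProb ψ c (fun i => g i (c i)) ≠ 0

def StronglyContextual {n : ℕ} (ψ : (Fin n → Fin 2) → ℂ) (M : Fin n → Set Obs) : Prop :=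
  ¬ ∃ g : Fin n → Obs → Bool, Consistent ψ M g

def LogicallyContextual {n : ℕ} (ψ : (Fin n → Fin 2) → ℂ) (M : Fin n → Set Obs) : Prop :=
  ∃ c : Fin n → Obs, (∀ i, c i ∈ M i) ∧ ∃ o : Fin n → Bool,
    jointProb ψ c o ≠ 0 ∧
    ¬ ∃ g : Fin n → Obs → Bool, Consistent ψ M g ∧ ∀ i, g i (c i) = o i

/-- The Pauli Z observable. -/
noncomputable def pauliZ : Obs where
  eplus := ![1, 0]
  eminus := ![0, 1]
  norm_plus := by simp [Fin.sum_univ_two]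
  norm_minus := by simp [Fin.sum_univ_two]
  orth := by simp [Fin.sum_univ_two]

/-- The Pauli Y observable. -/
noncomputable def pauliY : Obs where
  eplus := ![((Real.sqrt 2)⁻¹ : ℝ), ((Real.sqrt 2)⁻¹ : ℝ) * Complex.I]
  eminus := ![((Real.sqrt 2)⁻¹ : ℝ), -(((Real.sqrt 2)⁻¹ : ℝ) * Complex.I)]
  norm_plus := by
    have h : ‖(((Real.sqrt 2)⁻¹ : ℝ) : ℂ)‖ ^ 2 = 1 / 2 := by
      rw [Complex.norm_real, Real.norm_eq_abs, _root_.sq_abs, inv_pow,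
        Real.sq_sqrt (by norm_num : (0:ℝ) ≤ 2)]
      norm_num
    simp [Fin.sum_univ_two, norm_mul, h]
    norm_num [h]
  norm_minus := by
    have h : ‖(((Real.sqrt 2)⁻¹ : ℝ) : ℂ)‖ ^ 2 = 1 / 2 := by
      rw [Complex.norm_real, Real.norm_eq_abs, _root_.sq_abs, inv_pow,
        Real.sq_sqrt (by norm_num : (0:ℝ) ≤ 2)]
      norm_num
    simp [Fin.sum_univ_two, norm_mul, h]
    norm_num [h]
  orth := by
    have h : ((starRingEnd ℂ) (((Real.sqrt 2)⁻¹ : ℝ) : ℂ)) = (((Real.sqrt 2)⁻¹ : ℝ) : ℂ) :=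
      Complex.conj_ofReal _
    simp [Fin.sum_univ_two, map_mul, Complex.conj_I, h]
    linear_combination (((Real.sqrt 2 : ℝ) : ℂ))⁻¹ * (((Real.sqrt 2 : ℝ) : ℂ))⁻¹ * Complex.I_mul_I

/-- The Pauli X observable. -/
noncomputable def pauliX : Obs where
  eplus := ![((Real.sqrt 2)⁻¹ : ℝ), ((Real.sqrt 2)⁻¹ : ℝ)]
  eminus := ![((Real.sqrt 2)⁻¹ : ℝ), -(((Real.sqrt 2)⁻¹ : ℝ) : ℂ)]
  norm_plus := by
    have h : ‖(((Real.sqrt 2)⁻¹ : ℝ) : ℂ)‖ ^ 2 = 1 / 2 := by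
      rw [Complex.norm_real, Real.norm_eq_abs, _root_.sq_abs, inv_pow,
        Real.sq_sqrt (by norm_num : (0:ℝ) ≤ 2)]
      norm_num
    simp [Fin.sum_univ_two, h]
    norm_num [h]
  norm_minus := by
    have h : ‖(((Real.sqrt 2)⁻¹ : ℝ) : ℂ)‖ ^ 2 = 1 / 2 := by
      rw [Complex.norm_real, Real.norm_eq_abs, _root_.sq_abs, inv_pow,
        Real.sq_sqrt (by norm_num : (0:ℝ) ≤ 2)]
      norm_num
    simp [Fin.sum_univ_two, h]
    norm_num [h]
  orth := by
    have h : ((starRingEnd ℂ) (((Real.sqrt 2)⁻¹ : ℝ) : ℂ)) = (((Real.sqrt 2)⁻¹ : ℝ) : ℂ) :=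
      Complex.conj_ofReal _
    simp [Fin.sum_univ_two, h]

/-- Any balanced `(n+1)`-qubit state whose functional dependency has the form
`F q = q i + q j + G q` with `G` not depending on the coordinates `i`, `j` is strongly
contextual for the scenario where each party chooses between Pauli Y and Z. -/
noncomputable def ev (m : Obs) (b : Bool) (x : Fin 2) : ℂ :=
  (starRingEnd ℂ) ((if b then m.eplus else m.eminus) x)

def fbit (x : ZMod 2) : Fin 2 := if x = 0 then 0 else 1

lemma cast_eq_iff_fbit (b : Fin 2) (x : ZMod 2) : (((b : ℕ) : ZMod 2) = x) ↔ b = fbit x := by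
  revert b x; decide

lemma amp_sum {n : ℕ} (F : (Fin n → ZMod 2) → ZMod 2) (c : Fin (n+1) → Obs)
    (o : Fin (n+1) → Bool) (A : ℂ) :
    (∑ s : Fin (n+1) → Fin 2,
      (∏ k, (starRingEnd ℂ) ((if o k then (c k).eplus else (c k).eminus) (s k))) *
        (if ((s (Fin.last n) : ℕ) : ZMod 2) = F (fun k => ((s k.castSucc : ℕ) : ZMod 2))
          then A else 0))
    = A * ∑ q : Fin n → Fin 2,
        (∏ k : Fin n, ev (c k.castSucc) (o k.castSucc) (q k)) *
          ev (c (Fin.last n)) (o (Fin.last n)) (fbit (F (fun k => ((q k : ℕ) : ZMod 2)))) := by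
  rw [← Equiv.sum_comp (Fin.snocEquiv (fun _ => Fin 2)), Fintype.sum_prod_type,
    Finset.sum_comm, Finset.mul_sum]
  refine Finset.sum_congr rfl (fun q _ => ?_)
  have step : ∀ b : Fin 2,
      ((∏ k : Fin (n+1), (starRingEnd ℂ)
          ((if o k then (c k).eplus else (c k).eminus) ((Fin.snocEquiv (fun _ => Fin 2)) (b, q) k))) *
        (if (((Fin.snocEquiv (fun _ => Fin 2)) (b, q) (Fin.last n) : ℕ) : ZMod 2)
            = F (fun k => (((Fin.snocEquiv (fun _ => Fin 2)) (b, q) k.castSucc : ℕ) : ZMod 2))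
          then A else 0))
      = (∏ k : Fin n, ev (c k.castSucc) (o k.castSucc) (q k)) *
          (ev (c (Fin.last n)) (o (Fin.last n)) b *
            (if b = fbit (F (fun k => ((q k : ℕ) : ZMod 2))) then A else 0)) := by
    intro b
    have hsnoc : ∀ k : Fin n,
        (Fin.snocEquiv (fun _ => Fin 2) (b, q)) k.castSucc = q k := by
      intro k; simp [Fin.snocEquiv]
    have hlast : (Fin.snocEquiv (fun _ => Fin 2) (b, q)) (Fin.last n) = b := by
      simp [Fin.snocEquiv]
    rw [Fin.prod_univ_castSucc]
    simp only [hsnoc, hlast, ev, cast_eq_iff_fbit]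
    ring
  rw [Finset.sum_congr rfl (fun b _ => step b), ← Finset.mul_sum]
  rw [Finset.sum_congr rfl (fun b _ => mul_ite (b = fbit (F fun k => ((q k:ℕ):ZMod 2)))
    (ev (c (Fin.last n)) (o (Fin.last n)) b) A 0)]
  simp only [mul_zero]
  rw [Finset.sum_ite_eq']
  simp [mul_comm, mul_left_comm, mul_assoc]

lemma restrict {n : ℕ} (i j : Fin n) (hij : i ≠ j) (w : Fin n → Fin 2 → ℂ)
    (z : Fin n → Fin 2)
    (hw : ∀ k, k ≠ i → k ≠ j → ∀ x, w k x = if x = z k then 1 else 0)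
    (T : (Fin n → Fin 2) → ℂ) :
    ∑ q : Fin n → Fin 2, (∏ k, w k (q k)) * T q
      = ∑ a : Fin 2, ∑ b : Fin 2,
          w i a * w j b * T (Function.update (Function.update z i a) j b) := by
  classical
  have hprod : ∀ q : Fin n → Fin 2, (∏ k, w k (q k))
      = (if ∀ k ∈ ({i, j} : Finset (Fin n))ᶜ, q k = z k then 1 else 0) * (w i (q i) * w j (q j)) := by
    intro q
    rw [← Finset.prod_mul_prod_compl ({i, j} : Finset (Fin n)) (fun k => w k (q k))]
    rw [Finset.prod_insert (by simp [hij]), Finset.prod_singleton]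
    rw [show (∏ k ∈ ({i, j} : Finset (Fin n))ᶜ, w k (q k))
        = ∏ k ∈ ({i, j} : Finset (Fin n))ᶜ, (if q k = z k then (1:ℂ) else 0) from
      Finset.prod_congr rfl (fun k hk => by
        simp only [Finset.mem_compl, Finset.mem_insert, Finset.mem_singleton, not_or] at hk
        exact hw k hk.1 hk.2 (q k)), Finset.prod_boole]
    ring
  have hupd : ∀ q : Fin n → Fin 2, (∀ k ∈ ({i, j} : Finset (Fin n))ᶜ, q k = z k) →
      Function.update (Function.update z i (q i)) j (q j) = q := by
    intro q hq
    funext k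
    by_cases hkj : k = j
    · subst hkj; simp
    · by_cases hki : k = i
      · subst hki; rw [Function.update_of_ne hij, Function.update_self]
      · rw [Function.update_of_ne hkj, Function.update_of_ne hki]
        exact (hq k (by simp [hki, hkj])).symm
  calc ∑ q : Fin n → Fin 2, (∏ k, w k (q k)) * T q
      = ∑ q ∈ Finset.filter (fun q : Fin n → Fin 2 => ∀ k ∈ ({i, j} : Finset (Fin n))ᶜ, q k = z k)
          Finset.univ, w i (q i) * w j (q j) * T q := by
        rw [Finset.sum_filter]
        refine Finset.sum_congr rfl (fun q _ => ?_)
        rw [hprod]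
        by_cases h : ∀ k ∈ ({i, j} : Finset (Fin n))ᶜ, q k = z k <;> simp [h] <;> ring
    _ = ∑ p : Fin 2 × Fin 2, w i p.1 * w j p.2 *
          T (Function.update (Function.update z i p.1) j p.2) := by
        refine Finset.sum_nbij' (fun q => (q i, q j))
          (fun p => Function.update (Function.update z i p.1) j p.2)
          (fun q _ => Finset.mem_univ _) (fun p _ => ?_) (fun q hq => ?_) (fun p _ => ?_)
          (fun q hq => ?_)
        · simp only [Finset.mem_filter, Finset.mem_univ, true_and]
          intro k hk
          simp only [Finset.mem_compl, Finset.mem_insert, Finset.mem_singleton, not_or] at hk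
          rw [Function.update_of_ne hk.2, Function.update_of_ne hk.1]
        · simp only [Finset.mem_filter, Finset.mem_univ, true_and] at hq
          exact hupd q hq
        · rw [Function.update_self, Function.update_of_ne hij, Function.update_self]
        · simp only [Finset.mem_filter, Finset.mem_univ, true_and] at hq
          dsimp only
          rw [hupd q hq]
    _ = ∑ a : Fin 2, ∑ b : Fin 2, w i a * w j b *
          T (Function.update (Function.update z i a) j b) := by
        rw [Fintype.sum_prod_type]

lemma ev_Z (b : Bool) (x : Fin 2) :
    ev pauliZ b x = if x = (if b then 0 else 1) then 1 else 0 := by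
  rcases b <;> fin_cases x <;> simp [ev, pauliZ]

lemma ev_Y (b : Bool) (x : Fin 2) : ev pauliY b x =
    if x = 0 then (((Real.sqrt 2)⁻¹ : ℝ) : ℂ)
    else (if b then -((((Real.sqrt 2)⁻¹ : ℝ) : ℂ) * Complex.I)
      else (((Real.sqrt 2)⁻¹ : ℝ) : ℂ) * Complex.I) := by
  rcases b <;> fin_cases x <;>
    simp [ev, pauliY, Complex.conj_ofReal, map_mul, Complex.conj_I]

lemma zmod2_cases (x : ZMod 2) : x = 0 ∨ x = 1 := by revert x; decide

lemma final_contra : ∀ a b c d e f y : ZMod 2,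
    c = a + b + y → a + y + e + f = 1 → b + y + d + f = 1 → c + y + d + e = 1 → False := by
  decide
set_option maxHeartbeats 2000000 in
theorem balanced_xor_stronglyContextual (n : ℕ) (hn : 2 ≤ n)
    (F : (Fin n → ZMod 2) → ZMod 2) (i j : Fin n) (hij : i ≠ j)
    (G : (Fin n → ZMod 2) → ZMod 2)
    (hG : ∀ q q' : Fin n → ZMod 2, (∀ k, k ≠ i → k ≠ j → q k = q' k) → G q = G q')
    (hF : ∀ q, F q = q i + q j + G q) :
    StronglyContextual
      (fun s : Fin (n + 1) → Fin 2 =>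
        if ((s (Fin.last n) : ℕ) : ZMod 2) =
            F (fun k : Fin n => ((s k.castSucc : ℕ) : ZMod 2))
        then ((((Real.sqrt 2) ^ n)⁻¹ : ℝ) : ℂ) else 0)
      (fun _ : Fin (n + 1) => ({pauliY, pauliZ} : Set Obs)) := by
  rintro ⟨g, hg⟩
  classical
  set l := Fin.last n with hl
  set z : Fin n → Fin 2 := fun k => if g k.castSucc pauliZ then 0 else 1 with hz
  set γ : ZMod 2 := G (fun k => ((z k : ℕ) : ZMod 2)) with hγdef
  have hij' : i.castSucc ≠ j.castSucc := by
    simpa [Fin.castSucc_inj] using hij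
  have key : ∀ mi mj ml : Obs, mi ∈ ({pauliY, pauliZ} : Set Obs) →
      mj ∈ ({pauliY, pauliZ} : Set Obs) → ml ∈ ({pauliY, pauliZ} : Set Obs) →
      (∑ a : Fin 2, ∑ b : Fin 2, ev mi (g i.castSucc mi) a * ev mj (g j.castSucc mj) b *
        ev ml (g l ml) (fbit (((a : ℕ) : ZMod 2) + ((b : ℕ) : ZMod 2) + γ))) ≠ 0 := by
    intro mi mj ml hmi hmj hml
    set c : Fin (n+1) → Obs := fun k =>
      if k = i.castSucc then mi else if k = j.castSucc then mj else
        if k = l then ml else pauliZ with hc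
    have hci : c i.castSucc = mi := by simp [hc]
    have hcj : c j.castSucc = mj := by simp [hc, hij'.symm]
    have hcl : c l = ml := by
      simp [hc, hl, (Fin.castSucc_lt_last i).ne', (Fin.castSucc_lt_last j).ne']
    have hmem : ∀ k, c k ∈ ({pauliY, pauliZ} : Set Obs) := by
      intro k; rw [hc]; dsimp only
      split_ifs <;>
        first | exact hmi | exact hmj | exact hml | exact Set.mem_insert_of_mem _ rfl
    have h0 := hg c hmem
    simp only [jointProb] at h0
    rw [amp_sum F c (fun k => g k (c k)) _] at h0
    have hS : (∑ q : Fin n → Fin 2,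
        (∏ k : Fin n, ev (c k.castSucc) (g k.castSucc (c k.castSucc)) (q k)) *
          ev (c l) (g l (c l)) (fbit (F (fun k => ((q k : ℕ) : ZMod 2))))) ≠ 0 := by
      intro h
      apply h0
      rw [h, mul_zero, norm_zero]
      norm_num
    rw [restrict i j hij
      (fun k x => ev (c k.castSucc) (g k.castSucc (c k.castSucc)) x) z ?hw
      (fun q => ev (c l) (g l (c l)) (fbit (F (fun k => ((q k : ℕ) : ZMod 2)))))] at hS
    case hw =>
      intro k hki hkj x
      have h1 : k.castSucc ≠ i.castSucc := by simpa [Fin.castSucc_inj] using hki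
      have h2 : k.castSucc ≠ j.castSucc := by simpa [Fin.castSucc_inj] using hkj
      have h3 : c k.castSucc = pauliZ := by
        simp [hc, hl, h1, h2, (Fin.castSucc_lt_last k).ne]
      rw [h3, ev_Z]
    have hT : ∀ a b : Fin 2,
        F (fun k => ((Function.update (Function.update z i a) j b k : ℕ) : ZMod 2))
          = ((a : ℕ) : ZMod 2) + ((b : ℕ) : ZMod 2) + γ := by
      intro a b
      rw [hF]
      have hup_i : Function.update (Function.update z i a) j b i = a := by
        rw [Function.update_of_ne hij, Function.update_self]
      have hup_j : Function.update (Function.update z i a) j b j = b := by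
        rw [Function.update_self]
      have hupG : G (fun k => ((Function.update (Function.update z i a) j b k : ℕ) : ZMod 2))
          = γ := by
        rw [hγdef]
        apply hG
        intro k hki hkj
        rw [Function.update_of_ne hkj, Function.update_of_ne hki]
      rw [hup_i, hup_j, hupG]
    simp only [hT, hci, hcj, hcl] at hS
    exact hS
  have hYmem : pauliY ∈ ({pauliY, pauliZ} : Set Obs) := Set.mem_insert _ _
  have hZmem : pauliZ ∈ ({pauliY, pauliZ} : Set Obs) := Set.mem_insert_of_mem _ rfl
  have h0 := key pauliZ pauliZ pauliZ hZmem hZmem hZmem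
  have h1 := key pauliZ pauliY pauliY hZmem hYmem hYmem
  have h2 := key pauliY pauliZ pauliY hYmem hZmem hYmem
  have h3 := key pauliY pauliY pauliZ hYmem hYmem hZmem
  set ζi : ZMod 2 := ((z i : ℕ) : ZMod 2) with hζi
  set ζj : ZMod 2 := ((z j : ℕ) : ZMod 2) with hζj
  set ζl : ZMod 2 := (if g l pauliZ then 0 else 1) with hζl
  set ηi : ZMod 2 := (if g i.castSucc pauliY then 0 else 1) with hηi
  set ηj : ZMod 2 := (if g j.castSucc pauliY then 0 else 1) with hηj
  set ηl : ZMod 2 := (if g l pauliY then 0 else 1) with hηl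
  have E0 : ζl = ζi + ζj + γ := by
    rcases zmod2_cases γ with hg2 | hg2 <;>
    rcases hb1 : g i.castSucc pauliZ <;> rcases hb2 : g j.castSucc pauliZ <;> rcases hb3 : g l pauliZ <;>
    rw [hg2] at h0 ⊢ <;>
    simp only [hζi, hζj, hζl, hηi, hηj, hηl, hz, hb1, hb2, hb3] at h0 ⊢ <;>
    simp only [Fin.sum_univ_two, ev_Z, ev_Y] at h0 <;>
    norm_num (config := { decide := true }) at h0 <;> norm_num (config := { decide := true }) at ⊢ <;>
    first
    | rfl
    | decide
    | (exfalso; apply h0; ring1)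
    | (exfalso; apply h0; linear_combination (((Real.sqrt 2:ℝ):ℂ))⁻¹ * (((Real.sqrt 2:ℝ):ℂ))⁻¹ * Complex.I_mul_I)
    | (exfalso; apply h0; linear_combination (-((((Real.sqrt 2:ℝ):ℂ))⁻¹ * (((Real.sqrt 2:ℝ):ℂ))⁻¹)) * Complex.I_mul_I)
    | (exfalso; apply h0; linear_combination (((Real.sqrt 2)⁻¹:ℝ):ℂ) * (((Real.sqrt 2)⁻¹:ℝ):ℂ) * Complex.I_mul_I)
    | (exfalso; apply h0; linear_combination (-((((Real.sqrt 2)⁻¹:ℝ):ℂ) * (((Real.sqrt 2)⁻¹:ℝ):ℂ))) * Complex.I_mul_I)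
  have E1 : ζi + γ + ηj + ηl = 1 := by
    rcases zmod2_cases γ with hg2 | hg2 <;>
    rcases hb1 : g i.castSucc pauliZ <;> rcases hb2 : g j.castSucc pauliY <;> rcases hb3 : g l pauliY <;>
    rw [hg2] at h1 ⊢ <;>
    simp only [hζi, hζj, hζl, hηi, hηj, hηl, hz, hb1, hb2, hb3] at h1 ⊢ <;>
    simp only [Fin.sum_univ_two, ev_Z, ev_Y] at h1 <;>
    norm_num (config := { decide := true }) at h1 <;> norm_num (config := { decide := true }) at ⊢ <;>
    first
    | rfl
    | decide
    | (exfalso; apply h1; ring1)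
    | (exfalso; apply h1; linear_combination (((Real.sqrt 2:ℝ):ℂ))⁻¹ * (((Real.sqrt 2:ℝ):ℂ))⁻¹ * Complex.I_mul_I)
    | (exfalso; apply h1; linear_combination (-((((Real.sqrt 2:ℝ):ℂ))⁻¹ * (((Real.sqrt 2:ℝ):ℂ))⁻¹)) * Complex.I_mul_I)
    | (exfalso; apply h1; linear_combination (((Real.sqrt 2)⁻¹:ℝ):ℂ) * (((Real.sqrt 2)⁻¹:ℝ):ℂ) * Complex.I_mul_I)
    | (exfalso; apply h1; linear_combination (-((((Real.sqrt 2)⁻¹:ℝ):ℂ) * (((Real.sqrt 2)⁻¹:ℝ):ℂ))) * Complex.I_mul_I)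
  have E2 : ζj + γ + ηi + ηl = 1 := by
    rcases zmod2_cases γ with hg2 | hg2 <;>
    rcases hb1 : g i.castSucc pauliY <;> rcases hb2 : g j.castSucc pauliZ <;> rcases hb3 : g l pauliY <;>
    rw [hg2] at h2 ⊢ <;>
    simp only [hζi, hζj, hζl, hηi, hηj, hηl, hz, hb1, hb2, hb3] at h2 ⊢ <;>
    simp only [Fin.sum_univ_two, ev_Z, ev_Y] at h2 <;>
    norm_num (config := { decide := true }) at h2 <;> norm_num (config := { decide := true }) at ⊢ <;>
    first
    | rfl
    | decide
    | (exfalso; apply h2; ring1)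
    | (exfalso; apply h2; linear_combination (((Real.sqrt 2:ℝ):ℂ))⁻¹ * (((Real.sqrt 2:ℝ):ℂ))⁻¹ * Complex.I_mul_I)
    | (exfalso; apply h2; linear_combination (-((((Real.sqrt 2:ℝ):ℂ))⁻¹ * (((Real.sqrt 2:ℝ):ℂ))⁻¹)) * Complex.I_mul_I)
    | (exfalso; apply h2; linear_combination (((Real.sqrt 2)⁻¹:ℝ):ℂ) * (((Real.sqrt 2)⁻¹:ℝ):ℂ) * Complex.I_mul_I)
    | (exfalso; apply h2; linear_combination (-((((Real.sqrt 2)⁻¹:ℝ):ℂ) * (((Real.sqrt 2)⁻¹:ℝ):ℂ))) * Complex.I_mul_I)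
  have E3 : ζl + γ + ηi + ηj = 1 := by
    rcases zmod2_cases γ with hg2 | hg2 <;>
    rcases hb1 : g i.castSucc pauliY <;> rcases hb2 : g j.castSucc pauliY <;> rcases hb3 : g l pauliZ <;>
    rw [hg2] at h3 ⊢ <;>
    simp only [hζi, hζj, hζl, hηi, hηj, hηl, hz, hb1, hb2, hb3] at h3 ⊢ <;>
    simp only [Fin.sum_univ_two, ev_Z, ev_Y] at h3 <;>
    norm_num (config := { decide := true }) at h3 <;> norm_num (config := { decide := true }) at ⊢ <;>
    first
    | rfl
    | decide
    | (exfalso; apply h3; ring1)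
    | (exfalso; apply h3; linear_combination (((Real.sqrt 2:ℝ):ℂ))⁻¹ * (((Real.sqrt 2:ℝ):ℂ))⁻¹ * Complex.I_mul_I)
    | (exfalso; apply h3; linear_combination (-((((Real.sqrt 2:ℝ):ℂ))⁻¹ * (((Real.sqrt 2:ℝ):ℂ))⁻¹)) * Complex.I_mul_I)
    | (exfalso; apply h3; linear_combination (((Real.sqrt 2)⁻¹:ℝ):ℂ) * (((Real.sqrt 2)⁻¹:ℝ):ℂ) * Complex.I_mul_I)
    | (exfalso; apply h3; linear_combination (-((((Real.sqrt 2)⁻¹:ℝ):ℂ) * (((Real.sqrt 2)⁻¹:ℝ):ℂ))) * Complex.I_mul_I)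
  exact final_contra ζi ζj ζl ηi ηj ηl γ E0 E1 E2 E3
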